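/- arXiv:1403.2410 — 4 statements merged into one kernel-verified Lean document; each statement's English description precedes it below -/
import Mathlib

section
/- Let Γ be an even unimodular lattice, let Λ ⊆ Γ be a primitive nondegenerate sublattice with orthogonal complement Λ⊥, and let g ∈ O(Λ) induce the identity map on the discriminant group Λ*/Λ. Then the ℚ-linear map on Γ⊗ℚ = (Λ⊗ℚ) ⊕ (Λ⊥⊗ℚ) defined by (v,w) ↦ (g(v),w) maps Γ bijectively onto Γ; in other words, g extends to an automorphism ĝ ∈ O(Γ) whose restriction to Λ is g and which fixes Λ⊥ pointwise. -/
/-!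
STATEMENT 2: Let Γ be an even unimodular lattice, Λ ⊆ Γ a primitive nondegenerate
sublattice with orthogonal complement Λ⊥, and let g ∈ O(Λ) induce the identity on the
discriminant group Λ*/Λ (equivalently, g x − x ∈ Λ for all x ∈ Λ*).  Then the ℚ-linear
map φ on Γ⊗ℚ = (Λ⊗ℚ) ⊕ (Λ⊥⊗ℚ) given by (v,w) ↦ (g v, w) — i.e. the ℚ-linear map
restricting to g on Λ and fixing Λ⊥⊗ℚ pointwise — maps Γ bijectively onto Γ; in other
words it is an automorphism ĝ ∈ O(Γ) (it preserves the form on Γ) extending g and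
fixing Λ⊥ pointwise.
-/

noncomputable section

variable {V : Type} [AddCommGroup V] [Module ℚ V]

/-- The dual lattice `L* = {x ∈ L⊗ℚ : ⟨x,v⟩ ∈ ℤ for all v ∈ L}`. -/
def dualLat (B : V →ₗ[ℚ] V →ₗ[ℚ] ℚ) (L : Submodule ℤ V) : Submodule ℤ V where
  carrier := {x | x ∈ Submodule.span ℚ (L : Set V) ∧ ∀ v ∈ L, ∃ n : ℤ, B x v = (n : ℚ)}
  zero_mem' := ⟨Submodule.zero_mem _, fun v _ => ⟨0, by simp⟩⟩
  add_mem' := by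
    rintro x y ⟨hx1, hx2⟩ ⟨hy1, hy2⟩
    refine ⟨Submodule.add_mem _ hx1 hy1, fun v hv => ?_⟩
    obtain ⟨m, hm⟩ := hx2 v hv
    obtain ⟨k, hk⟩ := hy2 v hv
    exact ⟨m + k, by rw [map_add, LinearMap.add_apply, hm, hk]; push_cast; ring⟩
  smul_mem' := by
    rintro c x ⟨hx1, hx2⟩
    constructor
    · rw [← Int.cast_smul_eq_zsmul ℚ]
      exact Submodule.smul_mem _ _ hx1
    · intro v hv
      obtain ⟨m, hm⟩ := hx2 v hv
      refine ⟨c * m, ?_⟩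
      rw [← Int.cast_smul_eq_zsmul ℚ, map_smul, LinearMap.smul_apply, smul_eq_mul, hm]
      push_cast; ring

/-- The orthogonal complement `{w ∈ Γ : ⟨w,v⟩ = 0 for all v ∈ L}` of `L` in `Γ`. -/
def orthoCompl (B : V →ₗ[ℚ] V →ₗ[ℚ] ℚ) (Γ L : Submodule ℤ V) : Submodule ℤ V where
  carrier := {w | w ∈ Γ ∧ ∀ v ∈ L, B w v = 0}
  zero_mem' := ⟨Submodule.zero_mem _, fun v _ => by simp⟩
  add_mem' := by
    rintro x y ⟨hx1, hx2⟩ ⟨hy1, hy2⟩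
    exact ⟨Submodule.add_mem _ hx1 hy1, fun v hv => by
      rw [map_add, LinearMap.add_apply, hx2 v hv, hy2 v hv, add_zero]⟩
  smul_mem' := by
    rintro c x ⟨hx1, hx2⟩
    refine ⟨Submodule.smul_mem _ _ hx1, fun v hv => ?_⟩
    rw [← Int.cast_smul_eq_zsmul ℚ, map_smul, LinearMap.smul_apply, hx2 v hv, smul_zero]

theorem statement2
    (B : V →ₗ[ℚ] V →ₗ[ℚ] ℚ)
    (hsymm : ∀ x y, B x y = B y x)
    (hnondeg : ∀ x : V, (∀ y : V, B x y = 0) → x = 0)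
    (Γ : Submodule ℤ V)
    (hfg : Γ.FG)
    (hfull : Submodule.span ℚ (Γ : Set V) = ⊤)
    (hint : ∀ v ∈ Γ, ∀ w ∈ Γ, ∃ n : ℤ, B v w = (n : ℚ))
    (heven : ∀ v ∈ Γ, ∃ n : ℤ, B v v = 2 * (n : ℚ))
    (hunimod : dualLat B Γ = Γ)
    (Λ : Submodule ℤ V)
    (hsub : Λ ≤ Γ)
    (hprim : ∀ (c : ℤ) (x : V), x ∈ Γ → c ≠ 0 → c • x ∈ Λ → x ∈ Λ)
    (hΛnondeg : ∀ x ∈ Submodule.span ℚ (Λ : Set V), (∀ v ∈ Λ, B x v = 0) → x = 0)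
    -- φ is the ℚ-linear extension of g ∈ O(Λ) by the identity on Λ⊥⊗ℚ:
    (φ : V →ₗ[ℚ] V)
    (hgΛ : Set.BijOn φ (Λ : Set V) (Λ : Set V))
    (hgform : ∀ v ∈ Λ, ∀ w ∈ Λ, B (φ v) (φ w) = B v w)
    (hgfix : ∀ w ∈ Submodule.span ℚ ((orthoCompl B Γ Λ : Submodule ℤ V) : Set V), φ w = w)
    -- g induces the identity map on the discriminant group Λ*/Λ:
    (hgdisc : ∀ x ∈ dualLat B Λ, φ x - x ∈ Λ) :
    -- φ maps Γ bijectively onto Γ and preserves the form there: ĝ ∈ O(Γ).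
    Set.BijOn φ (Γ : Set V) (Γ : Set V) ∧
    (∀ v ∈ Γ, ∀ w ∈ Γ, B (φ v) (φ w) = B v w) := by
  classical
  -- finite dimensionality of V
  obtain ⟨s, hs⟩ := hfg
  have hspan : Submodule.span ℚ (s : Set V) = ⊤ := by
    rw [← hfull, ← hs, Submodule.span_span_of_tower]
  have hVfin : FiniteDimensional ℚ V := by
    have h1 : FiniteDimensional ℚ (Submodule.span ℚ (s : Set V)) :=
      FiniteDimensional.span_of_finite ℚ s.finite_toSet
    rw [hspan] at h1
    exact Module.Finite.equiv (Submodule.topEquiv)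
  set W : Submodule ℚ V := Submodule.span ℚ (Λ : Set V) with hW
  have hrefl : LinearMap.IsRefl B := fun x y h => by rw [hsymm]; exact h
  have hres : (LinearMap.BilinForm.restrict B W).Nondegenerate := by
    refine ⟨?_, ?_⟩
    · rintro ⟨x, hx⟩ h
      refine Subtype.ext (hΛnondeg x hx fun v hv => ?_)
      exact h ⟨v, Submodule.subset_span hv⟩
    · rintro ⟨x, hx⟩ h
      refine Subtype.ext (hΛnondeg x hx fun v hv => ?_)
      rw [hsymm]
      exact h ⟨v, Submodule.subset_span hv⟩
  have hcompl : IsCompl W (LinearMap.BilinForm.orthogonal B W) :=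
    LinearMap.BilinForm.isCompl_orthogonal_of_restrict_nondegenerate hrefl hres
  -- orthogonality facts
  have horth : ∀ p ∈ W, ∀ q ∈ LinearMap.BilinForm.orthogonal B W, B p q = 0 :=
    fun p hp q hq => hq p hp
  have horth' : ∀ p ∈ W, ∀ q ∈ LinearMap.BilinForm.orthogonal B W, B q p = 0 :=
    fun p hp q hq => by rw [hsymm]; exact hq p hp
  -- decomposition of any vector
  have hdec : ∀ v : V, ∃ p ∈ W, ∃ q ∈ LinearMap.BilinForm.orthogonal B W, v = p + q := by
    intro v
    have : v ∈ W ⊔ LinearMap.BilinForm.orthogonal B W := by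
      rw [hcompl.sup_eq_top]; trivial
    obtain ⟨p, hp, q, hq, hpq⟩ := Submodule.mem_sup.mp this
    exact ⟨p, hp, q, hq, hpq.symm⟩
  -- clearing denominators: every element of W has an integer multiple in Λ
  have hclear : ∀ x ∈ W, ∃ N : ℤ, N ≠ 0 ∧ (N : ℚ) • x ∈ Λ := by
    intro x hx
    induction hx using Submodule.span_induction with
    | mem v hv => exact ⟨1, one_ne_zero, by simpa using hv⟩
    | zero => exact ⟨1, one_ne_zero, by simp⟩
    | add a b _ _ ha hb =>
      obtain ⟨N, hN, hNa⟩ := ha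
      obtain ⟨M, hM, hMb⟩ := hb
      refine ⟨N * M, mul_ne_zero hN hM, ?_⟩
      have : ((N * M : ℤ) : ℚ) • (a + b) = (M : ℚ) • ((N : ℚ) • a) + (N : ℚ) • ((M : ℚ) • b) := by
        push_cast; rw [smul_add, smul_smul, smul_smul]; ring_nf
      rw [this]
      refine Submodule.add_mem _ ?_ ?_
      · rw [Int.cast_smul_eq_zsmul ℚ]; exact Submodule.smul_mem _ _ hNa
      · rw [Int.cast_smul_eq_zsmul ℚ]; exact Submodule.smul_mem _ _ hMb
    | smul c a _ ha =>
      obtain ⟨N, hN, hNa⟩ := ha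
      refine ⟨c.den * N, mul_ne_zero (Int.natCast_ne_zero.mpr c.den_nz) hN, ?_⟩
      have hc : (c.den : ℚ) * c = (c.num : ℚ) := by
        rw [mul_comm]; exact_mod_cast Rat.mul_den_eq_num c
      have : ((c.den * N : ℤ) : ℚ) • (c • a) = ((c.num : ℤ) : ℚ) • ((N : ℚ) • a) := by
        rw [smul_smul, smul_smul]
        congr 1
        push_cast
        rw [mul_right_comm, hc]
      rw [this, Int.cast_smul_eq_zsmul ℚ c.num]
      exact Submodule.smul_mem _ _ hNa
  -- φ maps W to W
  have hφW : ∀ x ∈ W, φ x ∈ W := by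
    intro x hx
    have h1 : Submodule.map φ W ≤ W := by
      rw [hW, Submodule.map_span]
      exact Submodule.span_le.mpr fun y hy => by
        obtain ⟨v, hv, rfl⟩ := hy
        exact Submodule.subset_span (hgΛ.mapsTo hv)
    exact h1 ⟨x, hx, rfl⟩
  -- φ preserves the form on W × W
  have hformW : ∀ x ∈ W, ∀ y ∈ W, B (φ x) (φ y) = B x y := by
    have step1 : ∀ v ∈ Λ, ∀ y ∈ W, B (φ v) (φ y) = B v y := by
      intro v hv y hy
      induction hy using Submodule.span_induction with
      | mem w hw => exact hgform v hv w hw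
      | zero => simp
      | add a b _ _ ha hb => simp only [map_add, LinearMap.add_apply, ha, hb]
      | smul c a _ ha => simp only [map_smul, LinearMap.smul_apply, ha]
    intro x hx
    induction hx using Submodule.span_induction with
    | mem v hv => exact step1 v hv
    | zero => simp
    | add a b _ _ ha hb =>
      intro y hy
      simp only [map_add, LinearMap.add_apply, ha y hy, hb y hy]
    | smul c a _ ha =>
      intro y hy
      simp only [map_smul, LinearMap.smul_apply, ha y hy]
  -- key: full decomposition data for elements of Γ
  have hkey : ∀ v ∈ Γ, ∃ p q : V, p ∈ dualLat B Λ ∧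
      q ∈ LinearMap.BilinForm.orthogonal B W ∧ φ q = q ∧ v = p + q := by
    intro v hv
    obtain ⟨p, hp, q, hq, rfl⟩ := hdec v
    obtain ⟨N, hN, hNp⟩ := hclear p hp
    refine ⟨p, q, ⟨hp, fun w hw => ?_⟩, hq, ?_, rfl⟩
    · -- p ∈ dualLat
      obtain ⟨n, hn⟩ := hint (p + q) hv w (hsub hw)
      refine ⟨n, ?_⟩
      have h0 : B q w = 0 := horth' w (Submodule.subset_span hw) q hq
      have := hn
      rw [map_add, LinearMap.add_apply, h0, add_zero] at this
      exact this
    · -- φ q = q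
      apply hgfix
      have hNq : (N : ℚ) • q ∈ orthoCompl B Γ Λ := by
        have hNv : (N : ℚ) • (p + q) ∈ Γ := by
          rw [Int.cast_smul_eq_zsmul ℚ]; exact Submodule.smul_mem _ _ hv
        constructor
        · have : (N : ℚ) • q = (N : ℚ) • (p + q) - (N : ℚ) • p := by
            rw [smul_add]; abel
          rw [this]
          exact Submodule.sub_mem _ hNv (hsub hNp)
        · intro w hw
          rw [map_smul, LinearMap.smul_apply, horth' w (Submodule.subset_span hw) q hq,
            smul_zero]
      have : q = (N : ℚ)⁻¹ • ((N : ℚ) • q) := by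
        rw [smul_smul, inv_mul_cancel₀ (by exact_mod_cast hN), one_smul]
      rw [this]
      exact Submodule.smul_mem _ _ (Submodule.subset_span hNq)
  -- φ maps Γ into Γ
  have hmaps : ∀ v ∈ Γ, φ v ∈ Γ := by
    intro v hv
    obtain ⟨p, q, hpd, hq, hqfix, rfl⟩ := hkey (v := v) hv
    have h1 : φ p - p ∈ Λ := hgdisc p hpd
    have : φ (p + q) = (p + q) + (φ p - p) := by
      rw [map_add, hqfix]; abel
    rw [this]
    exact Submodule.add_mem _ hv (hsub h1)
  -- form preservation on Γ
  have hform : ∀ v ∈ Γ, ∀ w ∈ Γ, B (φ v) (φ w) = B v w := by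
    intro v hv w hw
    obtain ⟨p, q, hpd, hq, hqfix, rfl⟩ := hkey (v := v) hv
    obtain ⟨p', q', hpd', hq', hqfix', rfl⟩ := hkey (v := w) hw
    have hpW : p ∈ W := hpd.1
    have hpW' : p' ∈ W := hpd'.1
    have e1 : φ (p + q) = φ p + q := by rw [map_add, hqfix]
    have e2 : φ (p' + q') = φ p' + q' := by rw [map_add, hqfix']
    rw [e1, e2]
    simp only [map_add, LinearMap.add_apply]
    rw [hformW p hpW p' hpW',
      horth (φ p) (hφW p hpW) q' hq', horth' (φ p') (hφW p' hpW') q hq,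
      horth p hpW q' hq', horth' p' hpW' q hq]
  -- injectivity of φ on W
  have hinjW : ∀ x ∈ W, φ x = 0 → x = 0 := by
    intro x hx h0
    refine hΛnondeg x hx fun v hv => ?_
    rw [← hformW x hx v (Submodule.subset_span hv), h0, map_zero, LinearMap.zero_apply]
  -- surjectivity onto Γ
  have hsurj : ∀ u ∈ Γ, ∃ v ∈ Γ, φ v = u := by
    intro u hu
    obtain ⟨p, q, hpd, hq, hqfix, rfl⟩ := hkey (v := u) hu
    -- the restricted endomorphism of W
    let f : W →ₗ[ℚ] W := LinearMap.restrict φ hφW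
    have hfinj : Function.Injective f := by
      rintro ⟨x, hx⟩ ⟨y, hy⟩ hxy
      have h1 : φ x = φ y := congrArg Subtype.val hxy
      have h2 : φ (x - y) = 0 := by rw [map_sub, h1, sub_self]
      have h3 : x - y = 0 := hinjW (x - y) (Submodule.sub_mem _ hx hy) h2
      exact Subtype.ext (sub_eq_zero.mp h3)
    obtain ⟨p₀, hp₀⟩ := LinearMap.surjective_of_injective hfinj ⟨p, hpd.1⟩
    have hφp₀ : φ (p₀ : V) = p := congrArg Subtype.val hp₀
    have hp₀d : (p₀ : V) ∈ dualLat B Λ := by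
      refine ⟨p₀.2, fun w hw => ?_⟩
      have h1 : B (p₀ : V) w = B p (φ w) := by
        rw [← hφp₀]
        exact (hformW (p₀ : V) p₀.2 w (Submodule.subset_span hw)).symm
      obtain ⟨n, hn⟩ := hpd.2 (φ w) (hgΛ.mapsTo hw)
      exact ⟨n, by rw [h1, hn]⟩
    have hdiff : φ (p₀ : V) - (p₀ : V) ∈ Λ := hgdisc _ hp₀d
    rw [hφp₀] at hdiff
    refine ⟨(p₀ : V) + q, ?_, ?_⟩
    · have : (p₀ : V) + q = (p + q) - (p - (p₀ : V)) := by abel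
      rw [this]
      exact Submodule.sub_mem _ hu (hsub hdiff)
    · rw [map_add, hφp₀, hqfix]
  -- injectivity on Γ
  have hinj : Set.InjOn φ (Γ : Set V) := by
    intro x hx y hy hxy
    have h1 : ∀ w ∈ Γ, B (x - y) w = 0 := by
      intro w hw
      have := hform x hx w hw
      have h2 := hform y hy w hw
      rw [hxy] at this
      rw [map_sub, LinearMap.sub_apply, ← this, ← h2, sub_self]
    have h2 : ∀ u : V, B (x - y) u = 0 := by
      intro u
      have hle : Submodule.span ℚ (Γ : Set V) ≤ LinearMap.ker (B (x - y)) :=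
        Submodule.span_le.mpr fun w hw => h1 w hw
      rw [hfull] at hle
      exact hle trivial
    have := hnondeg (x - y) h2
    exact sub_eq_zero.mp this
  refine ⟨⟨fun v hv => hmaps v hv, hinj, fun u hu => ?_⟩, hform⟩
  obtain ⟨v, hv, hφv⟩ := hsurj u hu
  exact ⟨v, hv, hφv⟩

end
end

section
/- Let Λ be a nondegenerate integral lattice of rank r with basis λ₁,…,λ_r, Gram matrix Q, and let g ∈ O(Λ) induce the identity map on the discriminant group Λ*/Λ, with M the matrix of g in this basis. Then det(Q) divides det(I_r − M) in ℤ. -/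
/-!
STATEMENT 5: Let Λ be a nondegenerate integral lattice of rank r with basis λ₁,…,λ_r,
Gram matrix Q, and let g ∈ O(Λ) induce the identity map on the discriminant group
Λ*/Λ, with M the matrix of g in this basis.  Then det(Q) divides det(I - M) in ℤ.

Everything is expressed in coordinates in the given basis: a lattice vector with
coordinate (row) vector v ∈ ℤ^r pairs with w as v Q wᵀ; g acts on coordinates by
x ↦ x M; a vector x ∈ ℚ^r lies in Λ* iff x Q has integer entries; g ∈ O(Λ) means
M Q Mᵀ = Q with M invertible over ℤ; and g induces the identity on Λ*/Λ iff
x M − x has integer entries for every x ∈ Λ*.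
-/

open Matrix in
/-- A rational vector has integer entries. -/
def IsIntVec {r : ℕ} (x : Fin r → ℚ) : Prop := ∀ i, ∃ c : ℤ, x i = (c : ℚ)

open Matrix in
theorem statement5 (r : ℕ) (Q M : Matrix (Fin r) (Fin r) ℤ)
    (hsymm : Qᵀ = Q)
    (hnondeg : Q.det ≠ 0)
    (hO : M * Q * Mᵀ = Q)
    (hMunit : IsUnit M.det)
    (hdisc : ∀ x : Fin r → ℚ,
      IsIntVec (Matrix.vecMul x (Q.map ((↑) : ℤ → ℚ))) →
      IsIntVec (Matrix.vecMul x (M.map ((↑) : ℤ → ℚ)) - x)) :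
    Q.det ∣ (1 - M).det := by
  classical
  set Qq : Matrix (Fin r) (Fin r) ℚ := Q.map ((↑) : ℤ → ℚ) with hQq
  set Mq : Matrix (Fin r) (Fin r) ℚ := M.map ((↑) : ℤ → ℚ) with hMq
  have hQqdet : Qq.det ≠ 0 := by
    rw [hQq]
    have := (RingHom.map_det (Int.castRingHom ℚ) Q)
    simp only [RingHom.mapMatrix_apply, Int.coe_castRingHom, eq_intCast] at this
    rw [← this]
    exact_mod_cast hnondeg
  have hinv : Invertible Qq := Qq.invertibleOfIsUnitDet (isUnit_iff_ne_zero.mpr hQqdet)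
  -- each row of Qq⁻¹ * (Mq - 1) is integral
  have key : ∀ i j, ∃ c : ℤ, (Qq⁻¹ * (Mq - 1)) i j = (c : ℚ) := by
    intro i j
    have hx : IsIntVec (Matrix.vecMul (Qq⁻¹ i) Qq) := by
      intro k
      have : Matrix.vecMul (Qq⁻¹ i) Qq = (Qq⁻¹ * Qq) i := rfl
      rw [this, Matrix.nonsing_inv_mul Qq (isUnit_iff_ne_zero.mpr hQqdet)]
      by_cases h : i = k
      · exact ⟨1, by simp [h, Matrix.one_apply]⟩
      · exact ⟨0, by simp [Matrix.one_apply, h]⟩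
    have := hdisc (Qq⁻¹ i) hx j
    convert this using 2
    simp [Matrix.mul_apply, Matrix.vecMul, dotProduct, Matrix.sub_apply,
      Matrix.one_apply, mul_sub, mul_ite, Finset.sum_sub_distrib]
  choose N hN using fun i => key i
  have hfact : Qq * (Matrix.of fun i j => ((N i j : ℚ))) = Mq - 1 := by
    have h1 : (Matrix.of fun i j => ((N i j : ℚ))) = Qq⁻¹ * (Mq - 1) := by
      ext i j; exact (hN i j).symm
    rw [h1, ← Matrix.mul_assoc, Matrix.mul_nonsing_inv Qq (isUnit_iff_ne_zero.mpr hQqdet),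
      Matrix.one_mul]
  -- take determinants
  have hNmap : (Matrix.of fun i j => ((N i j : ℚ))) =
      (Matrix.of fun i j => N i j).map ((↑) : ℤ → ℚ) := rfl
  have hdet : (Q.det : ℚ) * ((Matrix.of fun i j => N i j).det : ℚ) = ((M - 1).det : ℚ) := by
    have := congrArg Matrix.det hfact
    rw [Matrix.det_mul, hNmap] at this
    have e1 := (RingHom.map_det (Int.castRingHom ℚ) Q)
    have e2 := (RingHom.map_det (Int.castRingHom ℚ) (M - 1))
    have e3 := (RingHom.map_det (Int.castRingHom ℚ) (Matrix.of fun i j => N i j))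
    simp only [RingHom.mapMatrix_apply, Int.coe_castRingHom, eq_intCast] at e1 e2 e3
    have hsub : ((M - 1).map ((↑) : ℤ → ℚ)) = Mq - 1 := by
      ext i j
      by_cases h : i = j <;>
        simp [Mq, Matrix.sub_apply, Matrix.one_apply, h]
    rw [e1, e2, e3, hsub]
    exact this
  have hdetZ : Q.det * (Matrix.of fun i j => N i j).det = (M - 1).det := by
    exact_mod_cast hdet
  have h1M : (1 - M).det = (-1) ^ r * (M - 1).det := by
    rw [← neg_sub M (1 : Matrix (Fin r) (Fin r) ℤ), Matrix.det_neg]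
    simp
  rw [h1M, ← hdetZ]
  exact Dvd.dvd.mul_left (Dvd.intro _ rfl) _
end

section
/- Every even positive-definite lattice of rank 2 whose Gram matrix has determinant 3 is isometric to the A₂ root lattice, i.e. to ℤ² with Gram matrix [[2,−1],[−1,2]]. -/
/-!
STATEMENT 6: Every even positive-definite lattice of rank 2 whose Gram matrix has
determinant 3 is isometric to the A₂ root lattice, i.e. to ℤ² with Gram matrix
[[2,−1],[−1,2]].
-/

open Matrix

lemma keyAux : ∀ n : ℕ, ∀ a bb c : ℤ, a.toNat ≤ n → 0 < a → 4*a*c - bb^2 = 3 →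
    ∃ U : Matrix (Fin 2) (Fin 2) ℤ, IsUnit U.det ∧
      Uᵀ * !![2*a, bb; bb, 2*c] * U = !![2,-1;-1,2] := by
  intro n
  induction n with
  | zero => intro a bb c hle ha _; omega
  | succ n ih =>
    intro a bb c hle ha h3
    set k : ℤ := -((bb + a) / (2*a)) with hk
    set b' : ℤ := bb + 2*a*k with hb'
    set c' : ℤ := c + bb*k + a*k^2 with hc'
    have h2a : 0 < 2*a := by omega
    have hbmod : b' = (bb + a) % (2*a) - a := by
      rw [Int.emod_def]; simp [hb', hk]; ring
    have hlb : -a ≤ b' := by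
      have := Int.emod_nonneg (bb + a) (by omega : (2*a) ≠ 0)
      omega
    have hub : b' < a := by
      have := Int.emod_lt_of_pos (bb + a) h2a
      omega
    have h3' : 4*a*c' - b'^2 = 3 := by rw [hb', hc']; ring_nf; linarith [h3]
    have hU1 : !![(1:ℤ),k;0,1]ᵀ * !![2*a, bb; bb, 2*c] * !![(1:ℤ),k;0,1]
        = !![2*a, b'; b', 2*c'] := by
      ext i j
      fin_cases i <;> fin_cases j <;>
        simp [Matrix.mul_apply, Matrix.transpose_apply, Fin.sum_univ_two, Matrix.vecHead, Matrix.vecTail, hb', hc'] <;> ring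
    by_cases hca : a ≤ c'
    · -- reduced case
      have hb2 : b'^2 ≤ a^2 := by nlinarith
      have ha1 : a = 1 := by nlinarith
      have hbrange : b' = -1 ∨ b' = 0 := by omega
      have hbval : b' = -1 := by
        rcases hbrange with h | h
        · exact h
        · exfalso; rw [ha1, h] at h3'; norm_num at h3'; omega
      have hcval : c' = 1 := by rw [ha1, hbval] at h3'; norm_num at h3'; omega
      refine ⟨!![1,k;0,1], ?_, ?_⟩
      · simp [Matrix.det_fin_two_of]
      · rw [hU1, ha1, hbval, hcval]; norm_num
    · -- swap and recurse
      have hc'pos : 0 < c' := by nlinarith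
      have hlt : c'.toNat ≤ n := by omega
      obtain ⟨U', hU'det, hU'⟩ := ih c' b' a hlt hc'pos (by linarith)
      refine ⟨!![1,k;0,1] * (!![0,1;1,0] * U'), ?_, ?_⟩
      · rw [Matrix.det_mul, Matrix.det_mul]
        simp only [Matrix.det_fin_two_of]
        norm_num
        simpa using hU'det.neg
      · have hS : !![(0:ℤ),1;1,0]ᵀ * !![2*a, b'; b', 2*c'] * !![(0:ℤ),1;1,0]
            = !![2*c', b'; b', 2*a] := by
          rw [show !![(0:ℤ),1;1,0]ᵀ = !![(0:ℤ),1;1,0] by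
            ext i j; fin_cases i <;> fin_cases j <;> simp]
          rw [Matrix.mul_fin_two, Matrix.mul_fin_two]
          norm_num
        calc (!![1,k;0,1] * (!![0,1;1,0] * U'))ᵀ * !![2*a, bb; bb, 2*c] *
              (!![1,k;0,1] * (!![0,1;1,0] * U'))
            = U'ᵀ * (!![(0:ℤ),1;1,0]ᵀ * (!![(1:ℤ),k;0,1]ᵀ * !![2*a, bb; bb, 2*c] *
                !![(1:ℤ),k;0,1]) * !![(0:ℤ),1;1,0]) * U' := by
              simp only [Matrix.transpose_mul, Matrix.mul_assoc]
          _ = !![2,-1;-1,2] := by rw [hU1, hS, hU']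

lemma dot_conj' (U : Matrix (Fin 2) (Fin 2) ℤ) (A : Matrix (Fin 2) (Fin 2) ℤ)
    (x y : Fin 2 → ℤ) :
    (U *ᵥ x) ⬝ᵥ (A *ᵥ (U *ᵥ y)) = x ⬝ᵥ ((Uᵀ * A * U) *ᵥ y) := by
  simp [dotProduct, mulVec, Matrix.mul_apply, Fin.sum_univ_two, Matrix.transpose_apply]
  ring

open Matrix in
theorem statement6 {M : Type} [AddCommGroup M] [Module ℤ M]
    (B : M →ₗ[ℤ] M →ₗ[ℤ] ℤ)
    (hsymm : ∀ v w, B v w = B w v)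
    (heven : ∀ v, Even (B v v))
    (hpos : ∀ v, v ≠ 0 → 0 < B v v)
    (b : Module.Basis (Fin 2) ℤ M)
    (hdet : (Matrix.of fun s t => B (b s) (b t)).det = 3) :
    ∃ e : M ≃ₗ[ℤ] (Fin 2 → ℤ),
      ∀ v w, B v w = dotProduct (e v) (Matrix.mulVec !![2,-1;-1,2] (e w)) := by
  classical
  set G : Matrix (Fin 2) (Fin 2) ℤ := Matrix.of fun s t => B (b s) (b t) with hG
  obtain ⟨a, haeq⟩ := heven (b 0)
  obtain ⟨c, hceq⟩ := heven (b 1)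
  set bb : ℤ := B (b 0) (b 1) with hbb
  have hGeq : G = !![2*a, bb; bb, 2*c] := by
    ext i j
    fin_cases i <;> fin_cases j <;>
      simp [hG, haeq, hceq, hbb, hsymm (b 1) (b 0)] <;> ring
  have ha : 0 < a := by
    have := hpos (b 0) (b.ne_zero 0)
    omega
  have hdet' : 4*a*c - bb^2 = 3 := by
    have h : G.det = 3 := hdet
    rw [hGeq, Matrix.det_fin_two_of] at h
    nlinarith [h]
  obtain ⟨U, hUdet, hU⟩ := keyAux a.toNat a bb c le_rfl ha hdet'
  have hInv : Invertible U := U.invertibleOfIsUnitDet hUdet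
  refine ⟨b.equivFun.trans (U.toLinearEquiv' hInv).symm, ?_⟩
  intro v w
  have hB : B v w = (b.equivFun v) ⬝ᵥ (G *ᵥ (b.equivFun w)) := by
    conv_lhs => rw [← b.sum_equivFun v, ← b.sum_equivFun w]
    simp [map_sum, Finset.sum_apply, dotProduct, mulVec, Fin.sum_univ_two, hG, smul_eq_mul, -Module.Basis.sum_repr]
    ring
  have happ : ∀ u : M, (b.equivFun.trans (U.toLinearEquiv' hInv).symm) u
      = ⅟U *ᵥ (b.equivFun u) := by
    intro u
    have h2 : ((U.toLinearEquiv' hInv).symm : (Fin 2 → ℤ) →ₗ[ℤ] (Fin 2 → ℤ))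
        = Matrix.toLin' (⅟U) := Matrix.toLinearEquiv'_symm_apply U hInv
    calc (b.equivFun.trans (U.toLinearEquiv' hInv).symm) u
        = ((U.toLinearEquiv' hInv).symm : (Fin 2 → ℤ) →ₗ[ℤ] (Fin 2 → ℤ)) (b.equivFun u) := rfl
      _ = Matrix.toLin' (⅟U) (b.equivFun u) := by rw [h2]
      _ = ⅟U *ᵥ (b.equivFun u) := Matrix.toLin'_apply _ _
  rw [happ v, happ w, dot_conj', hB]
  congr 1
  have hmain : (⅟U)ᵀ * !![2,-1;-1,2] * ⅟U = G := by
    rw [hGeq, ← hU]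
    have h1 : (⅟U)ᵀ * Uᵀ = 1 := by rw [← Matrix.transpose_mul, mul_invOf_self,
      Matrix.transpose_one]
    calc (⅟U)ᵀ * (Uᵀ * !![2*a, bb; bb, 2*c] * U) * ⅟U
        = ((⅟U)ᵀ * Uᵀ) * !![2*a, bb; bb, 2*c] * (U * ⅟U) := by
          simp only [Matrix.mul_assoc]
      _ = !![2*a, bb; bb, 2*c] := by rw [h1, mul_invOf_self]; simp
  rw [hmain]
end

section
/- Every even positive-definite lattice of rank 2 whose Gram matrix has determinant 4 is isometric to the lattice A₁ ⊕ A₁, i.e. to ℤ² with Gram matrix [[2,0],[0,2]]. -/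
/-!
STATEMENT 7: Every even positive-definite lattice of rank 2 whose Gram matrix has
determinant 4 is isometric to the lattice A₁ ⊕ A₁, i.e. to ℤ² with Gram matrix
[[2,0],[0,2]].
-/

set_option maxHeartbeats 1000000 in
open Matrix in
theorem statement7 {M : Type} [AddCommGroup M] [Module ℤ M]
    (B : M →ₗ[ℤ] M →ₗ[ℤ] ℤ)
    (hsymm : ∀ v w, B v w = B w v)
    (heven : ∀ v, Even (B v v))
    (hpos : ∀ v, v ≠ 0 → 0 < B v v)
    (b : Module.Basis (Fin 2) ℤ M)
    (hdet : (Matrix.of fun s t => B (b s) (b t)).det = 4) :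
    ∃ e : M ≃ₗ[ℤ] (Fin 2 → ℤ),
      ∀ v w, B v w = dotProduct (e v) (Matrix.mulVec !![2,0;0,2] (e w)) := by
  classical
  -- the Gram determinant condition in scalar form
  have hdet' : B (b 0) (b 0) * B (b 1) (b 1) - B (b 0) (b 1) * B (b 0) (b 1) = 4 := by
    rw [Matrix.det_fin_two] at hdet
    simp only [Matrix.of_apply] at hdet
    rw [hsymm (b 1) (b 0)] at hdet
    linarith
  -- vectors given by coordinates
  set vec : ℤ → ℤ → M := fun s t => b.equivFun.symm ![s, t] with hvec
  have hvec0 : vec 0 0 = 0 := by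
    rw [hvec]
    have : (![(0 : ℤ), 0] : Fin 2 → ℤ) = 0 := by
      funext i; fin_cases i <;> rfl
    simp only [this, map_zero]
  have hvecinj : ∀ s t : ℤ, vec s t = 0 → s = 0 ∧ t = 0 := by
    intro s t h
    rw [← hvec0] at h
    have := b.equivFun.symm.injective h
    constructor
    · simpa using congrFun this 0
    · simpa using congrFun this 1
  -- expansion of the bilinear form on coordinates
  have expand : ∀ x1 y1 x2 y2 : ℤ,
      B (vec x1 y1) (vec x2 y2) =
        x1 * x2 * B (b 0) (b 0) + (x1 * y2 + y1 * x2) * B (b 0) (b 1)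
          + y1 * y2 * B (b 1) (b 1) := by
    intro x1 y1 x2 y2
    rw [hvec]
    simp only [Module.Basis.equivFun_symm_apply, Fin.sum_univ_two, Matrix.cons_val_zero,
      Matrix.cons_val_one, Matrix.head_cons, map_add, LinearMap.map_smul,
      LinearMap.add_apply, LinearMap.smul_apply, smul_eq_mul]
    rw [hsymm (b 1) (b 0)]
    ring
  -- minimal norm vector
  have hP : ∃ n : ℕ, ∃ v : M, v ≠ 0 ∧ B v v = (n : ℤ) := by
    refine ⟨(B (b 0) (b 0)).toNat, b 0, b.ne_zero 0, ?_⟩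
    rw [Int.toNat_of_nonneg (hpos _ (b.ne_zero 0)).le]
  set m : ℕ := Nat.find hP with hm
  obtain ⟨u, hu0, hum⟩ := Nat.find_spec hP
  have hmin : ∀ v : M, v ≠ 0 → (m : ℤ) ≤ B v v := by
    intro v hv
    have hPv : ∃ w : M, w ≠ 0 ∧ B w w = ((B v v).toNat : ℤ) := by
      refine ⟨v, hv, ?_⟩
      rw [Int.toNat_of_nonneg (hpos v hv).le]
    have := Nat.find_min' hP hPv
    calc (m : ℤ) ≤ ((B v v).toNat : ℤ) := by exact_mod_cast this
      _ = B v v := Int.toNat_of_nonneg (hpos v hv).le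
  have hmpos : 0 < (m : ℤ) := hum ▸ hpos u hu0
  -- coordinates of u
  set x : ℤ := b.repr u 0 with hx
  set y : ℤ := b.repr u 1 with hy
  have hu : vec x y = u := by
    show b.equivFun.symm ![x, y] = u
    have : (![x, y] : Fin 2 → ℤ) = b.equivFun u := by
      funext i
      fin_cases i <;> simp [Module.Basis.equivFun_apply, hx, hy]
    rw [this, b.equivFun.symm_apply_apply]
  -- u is primitive
  set g : ℕ := Int.gcd x y with hg
  have hg0 : g ≠ 0 := by
    intro h
    apply hu0
    obtain ⟨hx0, hy0⟩ := Int.gcd_eq_zero_iff.mp h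
    rw [← hu, hx0, hy0, hvec0]
  have hg1 : (g : ℤ) = 1 := by
    have hxx : x = (g : ℤ) * (x / (g : ℤ)) := (Int.mul_ediv_cancel' (Int.gcd_dvd_left x y)).symm
    have hyy : y = (g : ℤ) * (y / (g : ℤ)) := (Int.mul_ediv_cancel' (Int.gcd_dvd_right x y)).symm
    set x' : ℤ := x / (g : ℤ)
    set y' : ℤ := y / (g : ℤ)
    have hu'0 : vec x' y' ≠ 0 := by
      intro h
      obtain ⟨hx0, hy0⟩ := hvecinj _ _ h
      apply hu0
      rw [← hu, hxx, hyy, hx0, hy0]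
      convert hvec0 using 2 <;> ring
    have h1 : B u u = (g : ℤ) * ((g : ℤ) * B (vec x' y') (vec x' y')) := by
      rw [← hu, hxx, hyy, expand, expand]
      ring
    have h2 : (m : ℤ) ≤ B (vec x' y') (vec x' y') := hmin _ hu'0
    have h3 : 1 ≤ (g : ℤ) := by
      have : 0 < g := Nat.pos_of_ne_zero hg0
      exact_mod_cast this
    have h4 : (g : ℤ) * (g : ℤ) * (m : ℤ) ≤ (g : ℤ) * ((g : ℤ) * B (vec x' y') (vec x' y')) := by
      nlinarith
    have h6 : (g : ℤ) * (g : ℤ) * (m : ℤ) ≤ (m : ℤ) := by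
      calc (g : ℤ) * (g : ℤ) * (m : ℤ) ≤ (g : ℤ) * ((g : ℤ) * B (vec x' y') (vec x' y')) := h4
        _ = B u u := h1.symm
        _ = (m : ℤ) := hum
    have h7 : (g : ℤ) * (g : ℤ) ≤ 1 := by nlinarith [h6, hmpos]
    nlinarith [h7, h3]
  -- Bézout coefficients
  set p : ℤ := Int.gcdA x y with hp
  set q : ℤ := Int.gcdB x y with hq
  have hbez : x * p + y * q = 1 := by
    have := Int.gcd_eq_gcd_ab x y
    rw [← hg, hg1] at this
    linarith
  -- the second basis vector (before reduction)
  set v : M := vec (-q) p with hv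
  set N : ℤ := B u v with hN
  -- determinant identity for the pair (u, v)
  have key2 : B u u * B v v - N * N = 4 := by
    have e1 : B u u = x * x * B (b 0) (b 0) + (x * y + y * x) * B (b 0) (b 1)
        + y * y * B (b 1) (b 1) := by
      rw [← hu]; exact expand x y x y
    have e2 : N = x * (-q) * B (b 0) (b 0) + (x * p + y * (-q)) * B (b 0) (b 1)
        + y * p * B (b 1) (b 1) := by
      rw [hN, ← hu, hv]; exact expand x y (-q) p
    have e3 : B v v = (-q) * (-q) * B (b 0) (b 0) + ((-q) * p + p * (-q)) * B (b 0) (b 1)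
        + p * p * B (b 1) (b 1) := by
      rw [hv]; exact expand (-q) p (-q) p
    rw [e1, e2, e3]
    linear_combination (x * p + y * q) ^ 2 * hdet' + 4 * (x * p + y * q + 1) * hbez
  -- evenness: B u u = 2 t
  obtain ⟨t, ht⟩ := heven u
  have hm2t : (m : ℤ) = 2 * t := by rw [← hum, ht]; ring
  have htpos : 0 < t := by linarith
  -- reduction step: choose k with |B u v - 2tk| ≤ t
  set k : ℤ := (N + t) / (2 * t) with hk
  have hdivmod : 2 * t * k + (N + t) % (2 * t) = N + t := Int.mul_ediv_add_emod _ _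
  have hmod1 : 0 ≤ (N + t) % (2 * t) := Int.emod_nonneg _ (by positivity)
  have hmod2 : (N + t) % (2 * t) < 2 * t := Int.emod_lt_of_pos _ (by positivity)
  set w : M := vec (-q - k * x) (p - k * y) with hw
  have hBuw : B u w = N - k * (2 * t) := by
    have e4 : B u w = B u v - k * B u u := by
      rw [hw, hv, ← hu]
      simp only [expand]
      ring
    rw [e4, ← hN, ht]
    ring
  have hBww : B w w = B v v - 2 * k * N + k * k * (2 * t) := by
    have e5 : B w w = B v v - 2 * k * B u v + k * k * B u u := by
      rw [hw, hv, ← hu]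
      simp only [expand]
      ring
    rw [e5, ← hN, ht]
    ring
  -- key determinant identity for the new pair (u, w)
  have key : 2 * t * B w w - B u w * B u w = 4 := by
    rw [hBuw, hBww]
    linear_combination key2 - B v v * ht
  -- bound on the off-diagonal term
  have hruw : B u w = (N + t) % (2 * t) - t := by rw [hBuw]; linarith
  have hr2 : B u w * B u w ≤ t * t := by
    rw [hruw]
    nlinarith [mul_nonneg hmod1 (by linarith : (0:ℤ) ≤ 2 * t - (N + t) % (2 * t))]
  -- w ≠ 0 and minimality
  have hw0 : w ≠ 0 := by
    intro h
    rw [h] at key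
    simp only [map_zero, LinearMap.zero_apply] at key
    linarith
  have hminw : 2 * t ≤ B w w := by
    have h1 := hmin w hw0
    rw [hm2t] at h1
    linarith
  -- conclude t = 1, B u w = 0, B w w = 2
  have ht1 : t = 1 := by nlinarith
  have hs0 : B u w * B u w = 0 := by
    rw [ht1] at key hr2
    have h1 : 0 ≤ B u w * B u w := mul_self_nonneg _
    omega
  have hG01 : B u w = 0 := mul_self_eq_zero.mp hs0
  have hG11 : B w w = 2 := by
    rw [ht1] at key
    rw [hG01] at key
    linarith
  have hG00 : B u u = 2 := by rw [ht, ht1]; norm_num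
  have hG10 : B w u = 0 := by rw [hsymm w u, hG01]
  -- build the new basis via a unimodular matrix
  set A : Matrix (Fin 2) (Fin 2) ℤ := !![x, -q - k * x; y, p - k * y] with hA
  have hdetA' : IsUnit (LinearMap.toMatrix b b (Matrix.toLin b b A)).det := by
    rw [LinearMap.toMatrix_toLin]
    have : A.det = 1 := by
      rw [hA, Matrix.det_fin_two_of]
      linear_combination hbez
    rw [this]; exact isUnit_one
  set eA : M ≃ₗ[ℤ] M := LinearEquiv.ofIsUnitDet hdetA' with heA
  set b3 : Module.Basis (Fin 2) ℤ M := b.map eA with hb3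
  have hb30 : b3 0 = u := by
    rw [hb3, Module.Basis.map_apply, heA, LinearEquiv.ofIsUnitDet_apply, Matrix.toLin_self, ← hu]
    simp only [hvec]
    rw [Module.Basis.equivFun_symm_apply, Fin.sum_univ_two, Fin.sum_univ_two]
    simp [hA]
  have hb31 : b3 1 = w := by
    rw [hb3, Module.Basis.map_apply, heA, LinearEquiv.ofIsUnitDet_apply, Matrix.toLin_self, hw]
    simp only [hvec]
    rw [Module.Basis.equivFun_symm_apply, Fin.sum_univ_two, Fin.sum_univ_two]
    simp [hA]
  -- the isometry
  refine ⟨b3.equivFun, fun vv ww => ?_⟩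
  conv_lhs => rw [← b3.sum_repr vv, ← b3.sum_repr ww]
  simp only [Fin.sum_univ_two, map_add, LinearMap.map_smul, LinearMap.add_apply,
    LinearMap.smul_apply, smul_eq_mul, hb30, hb31, hG00, hG01, hG10, hG11]
  simp only [Module.Basis.equivFun_apply, dotProduct, Matrix.mulVec, Fin.sum_univ_two,
    Matrix.cons_val', Matrix.cons_val_zero, Matrix.cons_val_one, Matrix.head_cons,
    Matrix.empty_val', Matrix.cons_val_fin_one, Matrix.head_fin_const]
  norm_num
  ring
end
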